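/- Let a < b, let f : [a,b] → ℝ be càdlàg on [a,b], and let c > 0. Then inf { TV(f+h,[a,b]) : h : [a,b] → ℝ, sup_{s,u ∈ [a,b]} |h(s) − h(u)| ≤ c } = TV^c(f,[a,b]), and this infimum is attained by some h with sup_{s,u ∈ [a,b]} |h(s) − h(u)| ≤ c. -/

import Mathlib

open Set Filter Topology ENNReal

/-- Truncated variation `TV^c(f,[a,b])` as a supremum over partitions, valued in `[0,∞]`. -/
noncomputable def truncVar (f : ℝ → ℝ) (a b c : ℝ) : ℝ≥0∞ :=
  ⨆ (n : ℕ) (t : ℕ → ℝ) (_ : a ≤ t 0) (_ : ∀ i < n, t i < t (i + 1)) (_ : t n ≤ b),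
    ∑ i ∈ Finset.range n, ENNReal.ofReal (max (|f (t (i + 1)) - f (t i)| - c) 0)

/-- Total variation `TV(f,[a,b])`, valued in `[0,∞]`. -/
noncomputable def totalVar (f : ℝ → ℝ) (a b : ℝ) : ℝ≥0∞ := truncVar f a b 0

/-- Upward truncated variation `UTV^c(f,[a,b])`. -/
noncomputable def upTruncVar (f : ℝ → ℝ) (a b c : ℝ) : ℝ≥0∞ :=
  ⨆ (n : ℕ) (t : ℕ → ℝ) (_ : a ≤ t 0) (_ : ∀ i < n, t i < t (i + 1)) (_ : t n ≤ b),
    ∑ i ∈ Finset.range n, ENNReal.ofReal (max (f (t (i + 1)) - f (t i) - c) 0)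

/-- Downward truncated variation `DTV^c(f,[a,b])`. -/
noncomputable def downTruncVar (f : ℝ → ℝ) (a b c : ℝ) : ℝ≥0∞ :=
  ⨆ (n : ℕ) (t : ℕ → ℝ) (_ : a ≤ t 0) (_ : ∀ i < n, t i < t (i + 1)) (_ : t n ≤ b),
    ∑ i ∈ Finset.range n, ENNReal.ofReal (max (f (t i) - f (t (i + 1)) - c) 0)

/-- `f` is càdlàg on `[a,b]`: right-continuous at every point of `[a,b)` and
with a finite left limit at every point of `(a,b]`. -/
def CadlagOn (f : ℝ → ℝ) (a b : ℝ) : Prop :=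
  (∀ x ∈ Set.Ico a b, Filter.Tendsto f (𝓝[>] x) (𝓝 (f x))) ∧
  (∀ x ∈ Set.Ioc a b, ∃ L : ℝ, Filter.Tendsto f (𝓝[<] x) (𝓝 L))

namespace TVwork

/-- truncation: `(x - c)⁺` -/
noncomputable def pm (c x : ℝ) : ℝ := max (x - c) 0

lemma pm_nonneg (c x : ℝ) : 0 ≤ pm c x := le_max_right _ _
lemma sub_le_pm (c x : ℝ) : x - c ≤ pm c x := le_max_left _ _
lemma sub_pm_le (c x : ℝ) (hc : 0 ≤ c) : x - pm c x ≤ c := by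
  rcases le_total (x - c) 0 with h | h
  · simp [pm, max_eq_right h]; linarith
  · simp [pm, max_eq_left h]
lemma pm_mono (c : ℝ) {x y : ℝ} (h : x ≤ y) : pm c x ≤ pm c y :=
  max_le_max (by linarith) le_rfl

/-- generic DP auxiliary -/
noncomputable def dpAux (v : ℕ → ℝ) (ρ : ℝ → ℝ → ℝ) : ℕ → ℕ → ℝ
  | 0 => fun _ => 0
  | (k+1) => fun j =>
      if j ≤ k then dpAux v ρ k j
      else (Finset.range (k+1)).sup' ⟨0, by simp⟩ fun i => dpAux v ρ k i + ρ (v i) (v (k+1))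

/-- generic DP: max over subsequences of `0..k` ending at `k` of sums of `ρ`-weights -/
noncomputable def dp (v : ℕ → ℝ) (ρ : ℝ → ℝ → ℝ) (k : ℕ) : ℝ := dpAux v ρ k k

lemma dpAux_stable (v ρ) : ∀ k j, j ≤ k → dpAux v ρ k j = dp v ρ j := by
  intro k
  induction k with
  | zero => intro j hj; rw [Nat.le_zero.mp hj]; rfl
  | succ k ih =>
    intro j hj
    rcases Nat.lt_or_ge j (k+1) with h | h
    · have hjk : j ≤ k := by omega
      rw [dpAux]; dsimp only; rw [if_pos hjk, ih j hjk]
    · have : j = k + 1 := by omega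
      subst this; rfl

lemma dp_zero (v ρ) : dp v ρ 0 = 0 := rfl

lemma dp_succ (v ρ) (k : ℕ) :
    dp v ρ (k+1) = (Finset.range (k+1)).sup' ⟨0, by simp⟩
      (fun i => dp v ρ i + ρ (v i) (v (k+1))) := by
  show dpAux v ρ (k+1) (k+1) = _
  rw [dpAux]; dsimp only; rw [if_neg (by omega)]
  apply Finset.sup'_congr _ rfl
  intro i hi
  rw [dpAux_stable v ρ k i (Nat.lt_succ_iff.mp (Finset.mem_range.mp hi))]

lemma dp_ge (v ρ) {j k : ℕ} (h : j < k) : dp v ρ j + ρ (v j) (v k) ≤ dp v ρ k := by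
  obtain ⟨m, rfl⟩ : ∃ m, k = m + 1 := ⟨k - 1, by omega⟩
  rw [dp_succ]
  exact Finset.le_sup' (f := fun i => dp v ρ i + ρ (v i) (v (m+1)))
    (Finset.mem_range.mpr (by omega))

lemma dp_exists (v ρ) (k : ℕ) :
    ∃ j, j < k + 1 ∧ dp v ρ (k+1) = dp v ρ j + ρ (v j) (v (k+1)) := by
  rw [dp_succ]
  obtain ⟨j, hj, hje⟩ := Finset.exists_mem_eq_sup' (⟨0, by simp⟩ : (Finset.range (k+1)).Nonempty)
    (fun i => dp v ρ i + ρ (v i) (v (k+1)))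
  exact ⟨j, Finset.mem_range.mp hj, hje⟩

lemma dp_mono (v ρ) (hρ : ∀ x y, 0 ≤ ρ x y) {j k : ℕ} (h : j ≤ k) :
    dp v ρ j ≤ dp v ρ k := by
  rcases eq_or_lt_of_le h with rfl | h
  · exact le_rfl
  · have := dp_ge v ρ h
    have := hρ (v j) (v k)
    linarith

lemma dp_nonneg (v ρ) (hρ : ∀ x y, 0 ≤ ρ x y) (k : ℕ) : 0 ≤ dp v ρ k := by
  have := dp_mono v ρ hρ (Nat.zero_le k)
  rw [dp_zero] at this; exact this

lemma dp_congr_rho (v : ℕ → ℝ) {ρ ρ' : ℝ → ℝ → ℝ} (h : ∀ x y, ρ x y = ρ' x y) (k : ℕ) :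
    dp v ρ k = dp v ρ' k := by
  have : ρ = ρ' := funext fun x => funext fun y => h x y
  rw [this]

lemma dp_comp (v : ℕ → ℝ) (e : ℝ → ℝ) (ρ : ℝ → ℝ → ℝ) (k : ℕ) :
    dp (fun n => e (v n)) ρ k = dp v (fun x y => ρ (e x) (e y)) k := by
  induction k using Nat.strong_induction_on with
  | _ k ih =>
    match k with
    | 0 => rfl
    | (k+1) =>
      rw [dp_succ, dp_succ]
      apply Finset.sup'_congr _ rfl
      intro i hi
      rw [ih i (Finset.mem_range.mp hi)]

/-- upward DP -/
noncomputable def dU (v : ℕ → ℝ) (c : ℝ) : ℕ → ℝ := dp v (fun x y => pm c (y - x))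
/-- downward DP -/
noncomputable def dW (v : ℕ → ℝ) (c : ℝ) : ℕ → ℝ := dp v (fun x y => pm c (x - y))
/-- two-sided DP -/
noncomputable def dT (v : ℕ → ℝ) (c : ℝ) : ℕ → ℝ := dp v (fun x y => pm c |y - x|)
/-- discrete optimal trajectory defect -/
noncomputable def dD (v : ℕ → ℝ) (c : ℝ) (k : ℕ) : ℝ := v k - dU v c k + dW v c k

lemma dU_neg (v c k) : dU (fun n => -v n) c k = dW v c k := by
  unfold dU dW
  rw [dp_comp v (fun x => -x)]
  exact dp_congr_rho v (fun x y => by ring_nf) k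

lemma dW_neg (v c k) : dW (fun n => -v n) c k = dU v c k := by
  unfold dU dW
  rw [dp_comp v (fun x => -x)]
  exact dp_congr_rho v (fun x y => by ring_nf) k

lemma dD_neg (v c k) : dD (fun n => -v n) c k = - dD v c k := by
  unfold dD
  rw [dU_neg, dW_neg]; ring

lemma pm_pos_eq {c x : ℝ} (h : 0 < pm c x) : pm c x = x - c := by
  unfold pm at *
  rcases max_cases (x - c) 0 with ⟨h1, _⟩ | ⟨h1, _⟩ <;> [exact h1; linarith]

lemma dU_ge (v : ℕ → ℝ) (c : ℝ) {j k : ℕ} (h : j < k) :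
    dU v c j + pm c (v k - v j) ≤ dU v c k := dp_ge v _ h
lemma dW_ge (v : ℕ → ℝ) (c : ℝ) {j k : ℕ} (h : j < k) :
    dW v c j + pm c (v j - v k) ≤ dW v c k := dp_ge v _ h
lemma dT_ge (v : ℕ → ℝ) (c : ℝ) {j k : ℕ} (h : j < k) :
    dT v c j + pm c |v k - v j| ≤ dT v c k := dp_ge v _ h

lemma dU_mono (v : ℕ → ℝ) (c : ℝ) {j k : ℕ} (h : j ≤ k) : dU v c j ≤ dU v c k :=
  dp_mono v _ (fun _ _ => pm_nonneg _ _) h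
lemma dW_mono (v : ℕ → ℝ) (c : ℝ) {j k : ℕ} (h : j ≤ k) : dW v c j ≤ dW v c k :=
  dp_mono v _ (fun _ _ => pm_nonneg _ _) h
lemma dT_mono (v : ℕ → ℝ) (c : ℝ) {j k : ℕ} (h : j ≤ k) : dT v c j ≤ dT v c k :=
  dp_mono v _ (fun _ _ => pm_nonneg _ _) h
lemma dU_nonneg (v : ℕ → ℝ) (c : ℝ) (k : ℕ) : 0 ≤ dU v c k :=
  dp_nonneg v _ (fun _ _ => pm_nonneg _ _) k
lemma dW_nonneg (v : ℕ → ℝ) (c : ℝ) (k : ℕ) : 0 ≤ dW v c k :=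
  dp_nonneg v _ (fun _ _ => pm_nonneg _ _) k

lemma dU_exists (v : ℕ → ℝ) (c : ℝ) (k : ℕ) :
    ∃ j, j < k + 1 ∧ dU v c (k+1) = dU v c j + pm c (v (k+1) - v j) := dp_exists v _ k
lemma dW_exists (v : ℕ → ℝ) (c : ℝ) (k : ℕ) :
    ∃ j, j < k + 1 ∧ dW v c (k+1) = dW v c j + pm c (v j - v (k+1)) := dp_exists v _ k
lemma dT_exists (v : ℕ → ℝ) (c : ℝ) (k : ℕ) :
    ∃ j, j < k + 1 ∧ dT v c (k+1) = dT v c j + pm c |v (k+1) - v j| := dp_exists v _ k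

/-- if `dW` strictly increases from `l` to `k`, there is a last strict-increase point. -/
lemma dW_last_inc (v : ℕ → ℝ) (c : ℝ) :
    ∀ k l, l < k → dW v c l < dW v c k →
      ∃ m, l < m ∧ m ≤ k ∧ dW v c m = dW v c k ∧ dW v c (m-1) < dW v c m := by
  intro k
  induction k with
  | zero => omega
  | succ k ih =>
    intro l hl hW
    by_cases h : dW v c k < dW v c (k+1)
    · exact ⟨k+1, by omega, le_rfl, rfl, by simpa using h⟩
    · have heq : dW v c (k+1) = dW v c k :=
        le_antisymm (not_lt.mp h) (dW_mono v c (by omega))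
      have hlk : l < k := by
        rcases Nat.lt_or_ge l k with h' | h'
        · exact h'
        · exfalso
          have : l = k := by omega
          rw [this, heq] at hW; exact lt_irrefl _ hW
      obtain ⟨m, h1, h2, h3, h4⟩ := ih l hlk (by rw [← heq]; exact hW)
      exact ⟨m, h1, by omega, by rw [h3, heq], h4⟩

/-- Key oscillation bound for the discrete defect. -/
theorem dD_upper (c : ℝ) (hc : 0 ≤ c) :
    ∀ k (v : ℕ → ℝ) l, l < k → dD v c k - dD v c l ≤ c := by
  intro k
  induction k using Nat.strong_induction_on with
  | _ k IH =>
    intro v l hl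
    -- both-direction IH helper for pairs strictly below k
    have IH2 : ∀ x y, x < k → y < k → dD v c x - dD v c y ≤ c := by
      intro x y hx hy
      rcases lt_trichotomy x y with h | h | h
      · have := IH y hy (fun n => -v n) x h
        rw [dD_neg, dD_neg] at this; linarith
      · rw [h]; linarith
      · exact IH x hx v y h
    by_cases hW : dW v c k = dW v c l
    · have h1 := dU_ge v c hl
      have h2 := sub_pm_le c (v k - v l) hc
      unfold dD; linarith
    · have hWlt : dW v c l < dW v c k :=
        lt_of_le_of_ne (dW_mono v c (le_of_lt hl)) (Ne.symm hW)
      obtain ⟨m, hlm, hmk, hmeq, hminc⟩ := dW_last_inc v c k l hl hWlt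
      obtain ⟨m', rfl⟩ : ∃ m', m = m' + 1 := ⟨m - 1, by omega⟩
      obtain ⟨i, hi, hiw⟩ := dW_exists v c m'
      simp only [Nat.add_sub_cancel] at hminc
      have hWim : dW v c i ≤ dW v c m' := dW_mono v c (by omega)
      have hpm : 0 < pm c (v i - v (m'+1)) := by linarith
      have hpe := pm_pos_eq hpm
      have hDm : dD v c (m'+1) ≤ dD v c i - c := by
        have h1 : dU v c i ≤ dU v c (m'+1) := dU_mono v c (by omega)
        unfold dD; rw [hiw, hpe]; linarith
      have hDil : dD v c i - dD v c l ≤ c := by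
        rcases eq_or_ne i l with rfl | hne
        · linarith
        · exact IH2 i l (by omega) (by omega)
      -- dD (m'+1) ≤ dD l
      have hDml : dD v c (m'+1) ≤ dD v c l := by linarith
      rcases eq_or_lt_of_le hmk with rfl | hmk'
      · linarith
      · have h1 := dU_ge v c hmk'
        have h2 := sub_pm_le c (v k - v (m'+1)) hc
        have : dD v c k - dD v c (m'+1) ≤ c := by
          unfold dD; rw [← hmeq]; linarith
        linarith

theorem dD_osc (v : ℕ → ℝ) (c : ℝ) (hc : 0 ≤ c) (k l : ℕ) :
    |dD v c k - dD v c l| ≤ c := by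
  rcases lt_trichotomy k l with h | h | h
  · rw [abs_le]
    constructor
    · linarith [dD_upper c hc l v k h]
    · have := dD_upper c hc l (fun n => -v n) k h
      rw [dD_neg, dD_neg] at this; linarith
  · simp [h]; linarith
  · rw [abs_le]
    constructor
    · have := dD_upper c hc k (fun n => -v n) l h
      rw [dD_neg, dD_neg] at this; linarith
    · linarith [dD_upper c hc k v l h]

lemma pm_eq_zero {c x : ℝ} (h : ¬ 0 < pm c x) : pm c x = 0 :=
  le_antisymm (not_lt.mp h) (pm_nonneg c x)

lemma pm_abs_ge (c x : ℝ) : pm c x ≤ pm c |x| := pm_mono c (le_abs_self x)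
lemma pm_abs_ge' (c x : ℝ) : pm c (-x) ≤ pm c |x| := pm_mono c (neg_le_abs x)

lemma dp_last_inc (v : ℕ → ℝ) (ρ : ℝ → ℝ → ℝ) (hρ : ∀ x y, 0 ≤ ρ x y) :
    ∀ k l, l < k → dp v ρ l < dp v ρ k →
      ∃ m, l < m ∧ m ≤ k ∧ dp v ρ m = dp v ρ k ∧ dp v ρ (m-1) < dp v ρ m := by
  intro k
  induction k with
  | zero => omega
  | succ k ih =>
    intro l hl hW
    by_cases h : dp v ρ k < dp v ρ (k+1)
    · exact ⟨k+1, by omega, le_rfl, rfl, by simpa using h⟩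
    · have heq : dp v ρ (k+1) = dp v ρ k :=
        le_antisymm (not_lt.mp h) (dp_mono v ρ hρ (by omega))
      have hlk : l < k := by
        rcases Nat.lt_or_ge l k with h' | h'
        · exact h'
        · exfalso
          have : l = k := by omega
          rw [this, heq] at hW; exact lt_irrefl _ hW
      obtain ⟨m, h1, h2, h3, h4⟩ := ih l hlk (by rw [← heq]; exact hW)
      exact ⟨m, h1, by omega, by rw [h3, heq], h4⟩

lemma dU_last_inc (v : ℕ → ℝ) (c : ℝ) {k l : ℕ} (h1 : l < k) (h2 : dU v c l < dU v c k) :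
    ∃ m, l < m ∧ m ≤ k ∧ dU v c m = dU v c k ∧ dU v c (m-1) < dU v c m :=
  dp_last_inc v _ (fun _ _ => pm_nonneg _ _) k l h1 h2

lemma dW_last_inc' (v : ℕ → ℝ) (c : ℝ) {k l : ℕ} (h1 : l < k) (h2 : dW v c l < dW v c k) :
    ∃ m, l < m ∧ m ≤ k ∧ dW v c m = dW v c k ∧ dW v c (m-1) < dW v c m :=
  dp_last_inc v _ (fun _ _ => pm_nonneg _ _) k l h1 h2

/-- the key discrete inequality: `UTV + DTV ≤ TV^c`. -/
theorem dU_add_dW_le_dT (c : ℝ) (hc : 0 < c) :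
    ∀ k (v : ℕ → ℝ), dU v c k + dW v c k ≤ dT v c k := by
  intro k
  induction k using Nat.strong_induction_on with
  | _ k IH =>
    intro v
    match k with
    | 0 => simp [dU, dW, dT, dp_zero]
    | (n+1) =>
      obtain ⟨j, hj, hju⟩ := dU_exists v c n
      obtain ⟨i, hi, hiw⟩ := dW_exists v c n
      by_cases hpu : 0 < pm c (v (n+1) - v j)
      · have hpue := pm_pos_eq hpu
        have hvj : v j + c < v (n+1) := by linarith
        by_cases hpw : 0 < pm c (v i - v (n+1))
        · -- both active
          have hpwe := pm_pos_eq hpw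
          have hvi : v (n+1) + c < v i := by linarith
          rcases lt_trichotomy i j with hij | hij | hij
          · have h1 := dT_ge v c hj
            have h2 := pm_abs_ge c (v (n+1) - v j)
            have h3 := IH j hj v
            have h4 := dW_ge v c hij
            have h5 := sub_le_pm c (v i - v j)
            linarith
          · exfalso; rw [hij] at hvi; linarith
          · have h1 := dT_ge v c hi
            have h2' : pm c (v i - v (n+1)) ≤ pm c |v (n+1) - v i| := by
              have he : v i - v (n+1) = -(v (n+1) - v i) := by ring
              rw [he]; exact pm_abs_ge' c _
            have h3 := IH i hi v
            have h4 := dU_ge v c hij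
            have h5 := sub_le_pm c (v i - v j)
            linarith
        · -- up active, down inactive
          have hpwe := pm_eq_zero hpw
          by_cases hWj : dW v c j = dW v c (n+1)
          · have h1 := dT_ge v c hj
            have h2 := pm_abs_ge c (v (n+1) - v j)
            have h3 := IH j hj v
            linarith
          · have hWlt : dW v c j < dW v c (n+1) :=
              lt_of_le_of_ne (dW_mono v c (le_of_lt hj)) hWj
            obtain ⟨m, hjm, hmk, hmeq, hminc⟩ := dW_last_inc' v c hj hWlt
            have hmk' : m < n+1 := by
              rcases eq_or_lt_of_le hmk with heq | h
              · exfalso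
                subst heq
                simp only [Nat.add_sub_cancel] at hminc
                have := dW_mono v c (show i ≤ n by omega)
                linarith
              · exact h
            obtain ⟨m', rfl⟩ : ∃ m', m = m' + 1 := ⟨m - 1, by omega⟩
            obtain ⟨i', hi', hiw'⟩ := dW_exists v c m'
            simp only [Nat.add_sub_cancel] at hminc
            have hWi'm : dW v c i' ≤ dW v c m' := dW_mono v c (by omega)
            have hpm2 : 0 < pm c (v i' - v (m'+1)) := by linarith
            have hpe2 := pm_pos_eq hpm2
            have hDm : dD v c (m'+1) ≤ dD v c i' - c := by
              have h1 : dU v c i' ≤ dU v c (m'+1) := dU_mono v c (by omega)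
              unfold dD; rw [hiw', hpe2]; linarith
            have hosc := dD_osc v c (le_of_lt hc) i' j
            have hDmj : dD v c (m'+1) ≤ dD v c j := by
              rw [abs_le] at hosc; obtain ⟨hosc1, hosc2⟩ := hosc; linarith
            have hUm : dU v c j + (v (m'+1) - v j) ≤ dU v c (m'+1) := by
              have hWmono : dW v c j ≤ dW v c (m'+1) := dW_mono v c (by omega)
              unfold dD at hDmj; linarith
            have h1 := dT_ge v c hmk'
            have h2 : v (n+1) - v (m'+1) - c ≤ pm c |v (n+1) - v (m'+1)| :=
              le_trans (sub_le_pm _ _) (pm_abs_ge _ _)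
            have h3 := IH (m'+1) hmk' v
            linarith
      · have hpue := pm_eq_zero hpu
        by_cases hpw : 0 < pm c (v i - v (n+1))
        · -- down active, up inactive (mirror)
          have hpwe := pm_pos_eq hpw
          by_cases hUi : dU v c i = dU v c (n+1)
          · have h1 := dT_ge v c hi
            have h2' : pm c (v i - v (n+1)) ≤ pm c |v (n+1) - v i| := by
              have he : v i - v (n+1) = -(v (n+1) - v i) := by ring
              rw [he]; exact pm_abs_ge' c _
            have h3 := IH i hi v
            linarith
          · have hUlt : dU v c i < dU v c (n+1) :=
              lt_of_le_of_ne (dU_mono v c (le_of_lt hi)) hUi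
            obtain ⟨m, him, hmk, hmeq, hminc⟩ := dU_last_inc v c hi hUlt
            have hmk' : m < n+1 := by
              rcases eq_or_lt_of_le hmk with heq | h
              · exfalso
                subst heq
                simp only [Nat.add_sub_cancel] at hminc
                have := dU_mono v c (show j ≤ n by omega)
                linarith
              · exact h
            obtain ⟨m', rfl⟩ : ∃ m', m = m' + 1 := ⟨m - 1, by omega⟩
            obtain ⟨i', hi', hiu'⟩ := dU_exists v c m'
            simp only [Nat.add_sub_cancel] at hminc
            have hUi'm : dU v c i' ≤ dU v c m' := dU_mono v c (by omega)
            have hpm2 : 0 < pm c (v (m'+1) - v i') := by linarith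
            have hpe2 := pm_pos_eq hpm2
            have hDm : dD v c i' + c ≤ dD v c (m'+1) := by
              have h1 : dW v c i' ≤ dW v c (m'+1) := dW_mono v c (by omega)
              unfold dD; rw [hiu', hpe2]; linarith
            have hosc := dD_osc v c (le_of_lt hc) i' i
            have hDmj : dD v c i ≤ dD v c (m'+1) := by
              rw [abs_le] at hosc; obtain ⟨hosc1, hosc2⟩ := hosc; linarith
            have hWm : dW v c i + (v i - v (m'+1)) ≤ dW v c (m'+1) := by
              have hUmono : dU v c i ≤ dU v c (m'+1) := dU_mono v c (by omega)
              unfold dD at hDmj; linarith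
            have h1 := dT_ge v c hmk'
            have h2 : v (m'+1) - v (n+1) - c ≤ pm c |v (n+1) - v (m'+1)| := by
              have he : v (m'+1) - v (n+1) = -(v (n+1) - v (m'+1)) := by ring
              calc v (m'+1) - v (n+1) - c ≤ pm c (v (m'+1) - v (n+1)) := sub_le_pm _ _
                _ = pm c (-(v (n+1) - v (m'+1))) := by rw [he]
                _ ≤ pm c |v (n+1) - v (m'+1)| := pm_abs_ge' _ _
            have h3 := IH (m'+1) hmk' v
            linarith
        · -- neither active
          have hpwe := pm_eq_zero hpw
          have hUeq : dU v c (n+1) = dU v c n := by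
            apply le_antisymm _ (dU_mono v c (by omega))
            rw [hju, hpue, add_zero]; exact dU_mono v c (by omega)
          have hWeq : dW v c (n+1) = dW v c n := by
            apply le_antisymm _ (dW_mono v c (by omega))
            rw [hiw, hpwe, add_zero]; exact dW_mono v c (by omega)
          have h3 := IH n (by omega) v
          have h4 := dT_mono v c (Nat.le_succ n)
          rw [hUeq, hWeq]; linarith

/-! ### Continuous partition machinery -/

open Set ENNReal

/-- generic variation functional -/
noncomputable def genVar (G : ℝ → ℝ → ℝ) (f : ℝ → ℝ) (a b : ℝ) : ℝ≥0∞ :=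
  ⨆ (n : ℕ) (t : ℕ → ℝ) (_ : a ≤ t 0) (_ : ∀ i < n, t i < t (i + 1)) (_ : t n ≤ b),
    ∑ i ∈ Finset.range n, ENNReal.ofReal (G (f (t i)) (f (t (i + 1))))

/-- partitions of `[a,b]` -/
def Ptn (a b : ℝ) : Type :=
  {p : ℕ × (ℕ → ℝ) // a ≤ p.2 0 ∧ (∀ i < p.1, p.2 i < p.2 (i + 1)) ∧ p.2 p.1 ≤ b}

noncomputable def pSum (G : ℝ → ℝ → ℝ) (f : ℝ → ℝ) (p : ℕ × (ℕ → ℝ)) : ℝ≥0∞ :=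
  ∑ i ∈ Finset.range p.1, ENNReal.ofReal (G (f (p.2 i)) (f (p.2 (i + 1))))

lemma le_genVar (G : ℝ → ℝ → ℝ) (f : ℝ → ℝ) (a b : ℝ) {n : ℕ} {t : ℕ → ℝ}
    (h1 : a ≤ t 0) (h2 : ∀ i < n, t i < t (i + 1)) (h3 : t n ≤ b) :
    pSum G f (n, t) ≤ genVar G f a b := by
  unfold genVar
  refine le_iSup_of_le n (le_iSup_of_le t ?_)
  rw [iSup_pos h1, iSup_pos h2, iSup_pos h3]
  exact le_rfl

lemma genVar_eq_iSup_ptn (G : ℝ → ℝ → ℝ) (f : ℝ → ℝ) (a b : ℝ) :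
    genVar G f a b = ⨆ p : Ptn a b, pSum G f p.val := by
  apply le_antisymm
  · refine iSup_le fun n => iSup_le fun t => iSup_le fun h1 => iSup_le fun h2 =>
      iSup_le fun h3 => ?_
    exact le_iSup (fun p : Ptn a b => pSum G f p.val) ⟨(n, t), h1, h2, h3⟩
  · refine iSup_le fun p => ?_
    obtain ⟨⟨n, t⟩, h1, h2, h3⟩ := p
    exact le_genVar G f a b h1 h2 h3

lemma genVar_mono_right (G : ℝ → ℝ → ℝ) (f : ℝ → ℝ) (a : ℝ) {b b' : ℝ} (h : b ≤ b') :
    genVar G f a b ≤ genVar G f a b' := by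
  rw [genVar_eq_iSup_ptn]
  refine iSup_le fun p => ?_
  obtain ⟨⟨n, t⟩, h1, h2, h3⟩ := p
  exact le_genVar G f a b' h1 h2 (le_trans h3 h)

lemma genVar_mono_G {G G' : ℝ → ℝ → ℝ} (h : ∀ x y, G x y ≤ G' x y) (f : ℝ → ℝ) (a b : ℝ) :
    genVar G f a b ≤ genVar G' f a b := by
  rw [genVar_eq_iSup_ptn, genVar_eq_iSup_ptn]
  refine iSup_le fun p => le_trans ?_ (le_iSup _ p)
  exact Finset.sum_le_sum fun i _ => ENNReal.ofReal_le_ofReal (h _ _)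

/-- monotonicity of partition points -/
lemma ptn_pt_mono {n : ℕ} {t : ℕ → ℝ} (h : ∀ i < n, t i < t (i + 1)) :
    ∀ {i j}, i ≤ j → j ≤ n → t i ≤ t j := by
  have key : ∀ d i, i + d ≤ n → t i ≤ t (i + d) := by
    intro d
    induction d with
    | zero => intro i _; simp
    | succ d ih =>
      intro i hi
      calc t i ≤ t (i + d) := ih i (by omega)
        _ ≤ t (i + d + 1) := le_of_lt (h _ (by omega))
  intro i j hij hj
  have : j = i + (j - i) := by omega
  rw [this]; exact key _ _ (by omega)

lemma ptn_pt_mem {a b : ℝ} {n : ℕ} {t : ℕ → ℝ} (h1 : a ≤ t 0)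
    (h2 : ∀ i < n, t i < t (i + 1)) (h3 : t n ≤ b) {i : ℕ} (hi : i ≤ n) :
    t i ∈ Set.Icc a b :=
  ⟨le_trans h1 (ptn_pt_mono h2 (Nat.zero_le i) hi),
   le_trans (ptn_pt_mono h2 hi le_rfl) h3⟩

/-- appending one point to a variation sup -/
lemma genVar_append {G : ℝ → ℝ → ℝ} (hG : ∀ x y, 0 ≤ G x y) (f : ℝ → ℝ) {a x y : ℝ}
    (hax : a ≤ x) (hxy : x < y) :
    genVar G f a x + ENNReal.ofReal (G (f x) (f y)) ≤ genVar G f a y := by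
  set e := ENNReal.ofReal (G (f x) (f y)) with he_def
  have heB : e ≤ genVar G f a y := by
    have := le_genVar G f a y (n := 1) (t := fun i => if i = 0 then x else y)
      (by simpa using hax) (by intro i hi; interval_cases i; simpa using hxy) (by simp)
    simpa [pSum] using this
  have key : genVar G f a x ≤ genVar G f a y - e := by
    rw [genVar_eq_iSup_ptn]
    refine iSup_le fun p => ?_
    obtain ⟨⟨n, t⟩, h1, h2, h3⟩ := p
    dsimp only at h1 h2 h3
    refine ENNReal.le_sub_of_add_le_right ENNReal.ofReal_ne_top ?_
    rcases eq_or_lt_of_le h3 with heq | hlt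
    · -- t n = x : append y
      have hval : pSum G f (n, t) + e ≤
          pSum G f (n + 1, fun i => if i ≤ n then t i else y) := by
        rw [pSum, pSum, Finset.sum_range_succ]
        dsimp only
        rw [if_pos le_rfl, if_neg (by omega)]
        apply add_le_add _ (by rw [heq])
        apply le_of_eq
        refine Finset.sum_congr rfl fun i hi => ?_
        have hi' : i < n := Finset.mem_range.mp hi
        rw [if_pos (by omega), if_pos (by omega)]
      refine le_trans hval (le_genVar G f a y ?_ ?_ ?_)
      · simpa [Nat.zero_le n] using h1
      · intro i hi
        try dsimp only
        rcases Nat.lt_or_ge i n with h | h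
        · rw [if_pos (by omega), if_pos (by omega)]
          exact h2 i h
        · rw [if_pos (by omega : i ≤ n), if_neg (by omega : ¬ i + 1 ≤ n),
            show i = n by omega, heq]
          exact hxy
      · simp [show ¬ (n + 1 ≤ n) by omega]
    · -- t n < x : append x then y
      have hval : pSum G f (n, t) + e ≤
          pSum G f (n + 2, fun i => if i ≤ n then t i else if i = n + 1 then x else y) := by
        rw [pSum, pSum, Finset.sum_range_succ, Finset.sum_range_succ]
        dsimp only
        rw [if_pos le_rfl, if_neg (by omega), if_pos rfl, if_neg (by omega),
          if_neg (by omega)]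
        have hsum : ∑ i ∈ Finset.range n, ENNReal.ofReal (G (f (t i)) (f (t (i+1)))) =
            ∑ i ∈ Finset.range n, ENNReal.ofReal
              (G (f (if i ≤ n then t i else if i = n + 1 then x else y))
                 (f (if i + 1 ≤ n then t (i+1) else if i + 1 = n + 1 then x else y))) := by
          refine Finset.sum_congr rfl fun i hi => ?_
          have hi' : i < n := Finset.mem_range.mp hi
          rw [if_pos (by omega), if_pos (by omega)]
        rw [← hsum]
        exact add_le_add_left (le_add_right le_rfl) e
      refine le_trans hval (le_genVar G f a y ?_ ?_ ?_)
      · simpa [Nat.zero_le n] using h1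
      · intro i hi
        try dsimp only
        rcases Nat.lt_or_ge i n with h | h
        · rw [if_pos (by omega), if_pos (by omega)]
          exact h2 i h
        · rcases Nat.lt_or_ge i (n + 1) with h' | h'
          · rw [if_pos (by omega : i ≤ n), if_neg (by omega : ¬ i + 1 ≤ n),
              if_pos (by omega : i + 1 = n + 1), show i = n by omega]
            exact hlt
          · rw [if_neg (by omega : ¬ i ≤ n), if_pos (by omega : i = n + 1),
              if_neg (by omega : ¬ i + 1 ≤ n), if_neg (by omega : ¬ i + 1 = n + 1)]
            exact hxy
      · simp [show ¬ (n + 2 ≤ n) by omega, show ¬ (n + 2 = n + 1) by omega]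
  calc genVar G f a x + e ≤ (genVar G f a y - e) + e := add_le_add_left key e
    _ = genVar G f a y := tsub_add_cancel_of_le heB

/-! ### Bridging: sorted enumeration of a finite set of points -/

noncomputable def wE (F : Finset ℝ) (hne : F.Nonempty) (i : ℕ) : ℝ :=
  ((F.orderIsoOfFin rfl) ⟨min i (F.card - 1), by
    have := Finset.card_pos.mpr hne; omega⟩ : ℝ)

lemma wE_mem (F : Finset ℝ) (hne : F.Nonempty) (i : ℕ) : wE F hne i ∈ F :=
  ((F.orderIsoOfFin rfl) _).prop

lemma wE_strict (F : Finset ℝ) (hne : F.Nonempty) {i j : ℕ} (hij : i < j)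
    (hj : j ≤ F.card - 1) : wE F hne i < wE F hne j := by
  have hcard := Finset.card_pos.mpr hne
  have : (⟨min i (F.card - 1), by omega⟩ : Fin F.card) < ⟨min j (F.card - 1), by omega⟩ := by
    simp only [Fin.mk_lt_mk]
    omega
  exact Subtype.coe_lt_coe.mpr ((F.orderIsoOfFin rfl).lt_iff_lt.mpr this)

noncomputable def idxE (F : Finset ℝ) (x : ℝ) (hx : x ∈ F) : ℕ :=
  ((F.orderIsoOfFin rfl).symm ⟨x, hx⟩).val

lemma idxE_le (F : Finset ℝ) (x : ℝ) (hx : x ∈ F) : idxE F x hx ≤ F.card - 1 := by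
  unfold idxE
  have := ((F.orderIsoOfFin rfl).symm ⟨x, hx⟩).isLt
  omega

lemma wE_idxE (F : Finset ℝ) (hne : F.Nonempty) (x : ℝ) (hx : x ∈ F) :
    wE F hne (idxE F x hx) = x := by
  unfold wE idxE
  have h1 : min (((F.orderIsoOfFin rfl).symm ⟨x, hx⟩).val) (F.card - 1) =
      ((F.orderIsoOfFin rfl).symm ⟨x, hx⟩).val := by
    have := ((F.orderIsoOfFin rfl).symm ⟨x, hx⟩).isLt
    omega
  have h2 : (⟨min (((F.orderIsoOfFin rfl).symm ⟨x, hx⟩).val) (F.card - 1), by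
      have := Finset.card_pos.mpr hne; omega⟩ : Fin F.card) =
      (F.orderIsoOfFin rfl).symm ⟨x, hx⟩ := by
    apply Fin.ext; exact h1
  rw [h2]
  rw [OrderIso.apply_symm_apply]

lemma idxE_mono (F : Finset ℝ) {x y : ℝ} (hx : x ∈ F) (hy : y ∈ F) (h : x ≤ y) :
    idxE F x hx ≤ idxE F y hy := by
  unfold idxE
  have : (⟨x, hx⟩ : {z // z ∈ F}) ≤ ⟨y, hy⟩ := h
  exact (F.orderIsoOfFin rfl).symm.le_iff_le.mpr this

lemma idxE_strict (F : Finset ℝ) {x y : ℝ} (hx : x ∈ F) (hy : y ∈ F) (h : x < y) :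
    idxE F x hx < idxE F y hy := by
  unfold idxE
  have : (⟨x, hx⟩ : {z // z ∈ F}) < ⟨y, hy⟩ := h
  exact (F.orderIsoOfFin rfl).symm.lt_iff_lt.mpr this

/-- bridging: discrete DP value is below the continuous variation -/
lemma bridge_dp (ρ : ℝ → ℝ → ℝ) (G : ℝ → ℝ → ℝ) (hGρ : ∀ x y, G x y = ρ x y)
    (hG0 : ∀ x y, 0 ≤ G x y) (f : ℝ → ℝ) (a : ℝ) (F : Finset ℝ) (hne : F.Nonempty)
    (hF : ∀ x ∈ F, a ≤ x) :
    ∀ k, k ≤ F.card - 1 →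
      ENNReal.ofReal (dp (fun i => f (wE F hne i)) ρ k) ≤ genVar G f a (wE F hne k) := by
  intro k
  induction k using Nat.strong_induction_on with
  | _ k IH =>
    intro hk
    match k with
    | 0 =>
      rw [dp_zero]; simp
    | (k+1) =>
      obtain ⟨j, hj, hje⟩ := dp_exists (fun i => f (wE F hne i)) ρ k
      rw [hje]
      calc ENNReal.ofReal (dp (fun i => f (wE F hne i)) ρ j +
              ρ (f (wE F hne j)) (f (wE F hne (k+1))))
          ≤ ENNReal.ofReal (dp (fun i => f (wE F hne i)) ρ j) +
            ENNReal.ofReal (ρ (f (wE F hne j)) (f (wE F hne (k+1)))) :=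
            ENNReal.ofReal_add_le
        _ ≤ genVar G f a (wE F hne j) +
            ENNReal.ofReal (G (f (wE F hne j)) (f (wE F hne (k+1)))) := by
            rw [hGρ]
            exact add_le_add_left (IH j (by omega) (by omega)) _
        _ ≤ genVar G f a (wE F hne (k+1)) :=
            genVar_append hG0 f (hF _ (wE_mem F hne j)) (wE_strict F hne (by omega) hk)

/-- subsequence chaining: a partition with points in `F` is dominated by the DP value -/
lemma bridge_chain (ρ : ℝ → ℝ → ℝ) (hρ0 : ∀ x y, 0 ≤ ρ x y) (f : ℝ → ℝ)
    (F : Finset ℝ) (hne : F.Nonempty) :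
    ∀ (n : ℕ) (t : ℕ → ℝ), (∀ i < n, t i < t (i + 1)) → ∀ (hmem : ∀ i ≤ n, t i ∈ F),
      ∑ i ∈ Finset.range n, ρ (f (t i)) (f (t (i + 1)))
        ≤ dp (fun i => f (wE F hne i)) ρ (idxE F (t n) (hmem n le_rfl)) := by
  intro n
  induction n with
  | zero =>
    intro t _ hmem
    simp only [Finset.range_zero, Finset.sum_empty]
    exact dp_nonneg _ _ hρ0 _
  | succ n ih =>
    intro t h2 hmem
    rw [Finset.sum_range_succ]
    have hmem' : ∀ i ≤ n, t i ∈ F := fun i hi => hmem i (by omega)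
    have h2' : ∀ i < n, t i < t (i + 1) := fun i hi => h2 i (by omega)
    have hlt : idxE F (t n) (hmem' n le_rfl) < idxE F (t (n+1)) (hmem (n+1) le_rfl) :=
      idxE_strict F _ _ (h2 n (by omega))
    have hge := dp_ge (fun i => f (wE F hne i)) ρ hlt
    try dsimp only at hge
    rw [wE_idxE F hne (t n) (hmem' n le_rfl), wE_idxE F hne (t (n+1)) (hmem (n+1) le_rfl)]
      at hge
    have := ih t h2' hmem'
    linarith

/-- near-optimal partition extraction, in real terms -/
lemma exists_ptn_near {G : ℝ → ℝ → ℝ} (hG0 : ∀ x y, 0 ≤ G x y) (f : ℝ → ℝ) {a x : ℝ}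
    (hax : a ≤ x) (hfin : genVar G f a x ≠ ∞) {ε : ℝ} (hε : 0 < ε) :
    ∃ (n : ℕ) (t : ℕ → ℝ), a ≤ t 0 ∧ (∀ i < n, t i < t (i + 1)) ∧ t n ≤ x ∧
      (genVar G f a x).toReal - ε ≤ ∑ i ∈ Finset.range n, G (f (t i)) (f (t (i + 1))) := by
  by_cases h0 : genVar G f a x = 0
  · refine ⟨0, fun _ => a, le_rfl, by omega, hax, ?_⟩
    rw [h0]
    simp [le_of_lt hε]
  · have hlt : ENNReal.ofReal ((genVar G f a x).toReal - ε) < genVar G f a x := by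
      rcases le_or_gt ((genVar G f a x).toReal - ε) 0 with h | h
      · rw [ENNReal.ofReal_eq_zero.mpr h]
        exact pos_iff_ne_zero.mpr h0
      · rw [ENNReal.ofReal_lt_iff_lt_toReal (le_of_lt h) hfin]
        linarith
    rw [genVar_eq_iSup_ptn] at hlt ⊢
    rw [lt_iSup_iff] at hlt
    obtain ⟨⟨⟨n, t⟩, h1, h2, h3⟩, hp⟩ := hlt
    refine ⟨n, t, h1, h2, h3, ?_⟩
    have hfin' : pSum G f (n, t) ≠ ∞ := by
      unfold pSum
      exact (ENNReal.sum_lt_top.mpr (fun i _ => ENNReal.ofReal_lt_top)).ne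
    have := (ENNReal.ofReal_le_iff_le_toReal hfin').mp (le_of_lt hp)
    have heq : (pSum G f (n, t)).toReal = ∑ i ∈ Finset.range n, G (f (t i)) (f (t (i + 1))) := by
      unfold pSum
      rw [ENNReal.toReal_sum (fun i _ => ENNReal.ofReal_ne_top)]
      exact Finset.sum_congr rfl fun i _ => ENNReal.toReal_ofReal (hG0 _ _)
    rw [heq] at this
    linarith [this]

/-! ### Finiteness of truncated variation for cadlag functions -/

noncomputable def Gup (c : ℝ) : ℝ → ℝ → ℝ := fun x y => max (y - x - c) 0
noncomputable def Gdown (c : ℝ) : ℝ → ℝ → ℝ := fun x y => max (x - y - c) 0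
noncomputable def Gabs (c : ℝ) : ℝ → ℝ → ℝ := fun x y => max (|y - x| - c) 0

lemma Gup_nonneg (c : ℝ) : ∀ x y, 0 ≤ Gup c x y := fun _ _ => le_max_right _ _
lemma Gdown_nonneg (c : ℝ) : ∀ x y, 0 ≤ Gdown c x y := fun _ _ => le_max_right _ _
lemma Gabs_nonneg (c : ℝ) : ∀ x y, 0 ≤ Gabs c x y := fun _ _ => le_max_right _ _

lemma genVar_self (G : ℝ → ℝ → ℝ) (f : ℝ → ℝ) (a : ℝ) : genVar G f a a = 0 := by
  rw [genVar_eq_iSup_ptn]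
  apply le_antisymm _ zero_le
  refine iSup_le fun p => ?_
  obtain ⟨⟨n, t⟩, h1, h2, h3⟩ := p
  dsimp only at h1 h2 h3
  match n with
  | 0 => simp [pSum]
  | (n+1) =>
    exfalso
    have : t 0 < t (n+1) :=
      lt_of_lt_of_le (h2 0 (by omega)) (ptn_pt_mono h2 (by omega) le_rfl)
    have := le_trans h3 h1
    linarith

/-- small oscillation implies small truncated variation -/
lemma genVar_abs_le_of_osc (f : ℝ → ℝ) {x y c K : ℝ} (hc : 0 ≤ c) (hK : 0 ≤ K)
    (hosc : ∀ p q, p ∈ Set.Ico x y → q ∈ Set.Ico x y → |f p - f q| ≤ c)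
    (hlast : ∀ p ∈ Set.Ico x y, |f y - f p| - c ≤ K) :
    genVar (Gabs c) f x y ≤ ENNReal.ofReal K := by
  rw [genVar_eq_iSup_ptn]
  refine iSup_le fun p => ?_
  obtain ⟨⟨n, t⟩, h1, h2, h3⟩ := p
  dsimp only at h1 h2 h3
  match n with
  | 0 => simp [pSum]
  | (m+1) =>
    have hmem : ∀ i ≤ m + 1, t i ∈ Set.Icc x y := fun i hi => ptn_pt_mem h1 h2 h3 hi
    have hico : ∀ i ≤ m, t i ∈ Set.Ico x y := by
      intro i hi
      refine ⟨(hmem i (by omega)).1, ?_⟩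
      calc t i ≤ t m := ptn_pt_mono h2 hi (by omega)
        _ < t (m+1) := h2 m (by omega)
        _ ≤ y := h3
    rw [pSum]
    dsimp only
    rw [Finset.sum_range_succ]
    have hzero : ∑ i ∈ Finset.range m, ENNReal.ofReal (Gabs c (f (t i)) (f (t (i+1)))) = 0 := by
      refine Finset.sum_eq_zero fun i hi => ?_
      have hi' : i < m := Finset.mem_range.mp hi
      have h4 := hosc (t (i+1)) (t i) (hico (i+1) (by omega)) (hico i (by omega))
      have : Gabs c (f (t i)) (f (t (i+1))) = 0 := by
        unfold Gabs
        rw [max_eq_right]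
        linarith
      rw [this]; simp
    rw [hzero, zero_add]
    rcases eq_or_lt_of_le h3 with heq | hlt
    · refine ENNReal.ofReal_le_ofReal ?_
      unfold Gabs
      have := hlast (t m) (hico m le_rfl)
      rw [heq]
      exact max_le (by linarith) hK
    · refine ENNReal.ofReal_le_ofReal ?_
      have hm1 : t (m+1) ∈ Set.Ico x y := ⟨(hmem (m+1) le_rfl).1, hlt⟩
      have h4 := hosc (t (m+1)) (t m) hm1 (hico m le_rfl)
      unfold Gabs
      exact max_le (by linarith) hK

/-- straddle inequality -/
lemma Gabs_straddle (c u v w : ℝ) (hc : 0 ≤ c) :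
    Gabs c u v ≤ Gabs c u w + Gabs c w v + c := by
  unfold Gabs
  have h1 : |v - u| ≤ |w - u| + |v - w| := by
    have : v - u = (w - u) + (v - w) := by ring
    rw [this]; exact abs_add_le _ _
  rcases max_cases (|v - u| - c) 0 with ⟨he, hle⟩ | ⟨he, hle⟩ <;>
  rcases max_cases (|w - u| - c) 0 with ⟨he2, hle2⟩ | ⟨he2, hle2⟩ <;>
  rcases max_cases (|v - w| - c) 0 with ⟨he3, hle3⟩ | ⟨he3, hle3⟩ <;>
  rw [he, he2, he3] <;> linarith

/-- splitting a truncated variation at an intermediate point -/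
lemma genVar_abs_split (f : ℝ → ℝ) {a x y c : ℝ} (hax : a ≤ x) (hxy : x ≤ y) (hc : 0 ≤ c) :
    genVar (Gabs c) f a y ≤
      genVar (Gabs c) f a x + genVar (Gabs c) f x y + ENNReal.ofReal c := by
  classical
  rw [genVar_eq_iSup_ptn (Gabs c) f a y]
  refine iSup_le fun p => ?_
  obtain ⟨⟨n, t⟩, h1, h2, h3⟩ := p
  dsimp only at h1 h2 h3
  by_cases hall : t n ≤ x
  · calc pSum (Gabs c) f (n, t) ≤ genVar (Gabs c) f a x := le_genVar _ f a x h1 h2 hall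
      _ ≤ _ := le_add_right (le_add_right le_rfl)
  · have hex : ∃ i, x < t i := ⟨n, lt_of_not_ge hall⟩
    obtain ⟨k, hPk, hmin⟩ : ∃ k, x < t k ∧ ∀ j < k, ¬ x < t j :=
      ⟨Nat.find hex, Nat.find_spec hex, fun j hj => Nat.find_min hex hj⟩
    have hkn : k ≤ n := by
      by_contra hcon
      exact hmin n (by omega) (lt_of_not_ge hall)
    match k, hPk, hmin with
    | 0, hPk, hmin =>
      calc pSum (Gabs c) f (n, t) ≤ genVar (Gabs c) f x y :=
            le_genVar _ f x y (le_of_lt hPk) h2 h3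
        _ ≤ _ := le_add_right le_add_self
    | (m+1), hPk, hmin =>
      have hkn' : m + 1 ≤ n := hkn
      have hkm : t m ≤ x := not_lt.mp (hmin m (by omega))
      -- sum decomposition
      have hdecomp : pSum (Gabs c) f (n, t) =
          (∑ i ∈ Finset.range m, ENNReal.ofReal (Gabs c (f (t i)) (f (t (i+1))))) +
          ENNReal.ofReal (Gabs c (f (t m)) (f (t (m+1)))) +
          (∑ i ∈ Finset.range (n-(m+1)),
            ENNReal.ofReal (Gabs c (f (t (m+1+i))) (f (t (m+1+i+1))))) := by
        rw [pSum]
        dsimp only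
        have hsplit : Finset.range n = Finset.range (m+1) ∪ Finset.Ico (m+1) n := by
          rw [Finset.range_eq_Ico, ← Finset.Ico_union_Ico_eq_Ico (Nat.zero_le (m+1)) hkn']
          rw [← Finset.range_eq_Ico]
        have hdisj : Disjoint (Finset.range (m+1)) (Finset.Ico (m+1) n) := by
          simp [Finset.disjoint_left]
          intro i hi; omega
        rw [hsplit, Finset.sum_union hdisj, Finset.sum_range_succ, Finset.sum_Ico_eq_sum_range]
      rw [hdecomp]
      -- bound straddle term
      have hstrad : ENNReal.ofReal (Gabs c (f (t m)) (f (t (m+1)))) ≤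
          ENNReal.ofReal (Gabs c (f (t m)) (f x)) +
          ENNReal.ofReal (Gabs c (f x) (f (t (m+1)))) + ENNReal.ofReal c := by
        rw [← ENNReal.ofReal_add (Gabs_nonneg c _ _) (Gabs_nonneg c _ _),
          ← ENNReal.ofReal_add (add_nonneg (Gabs_nonneg c _ _) (Gabs_nonneg c _ _)) hc]
        exact ENNReal.ofReal_le_ofReal (Gabs_straddle c _ _ _ hc)
      -- left part
      have hleft : (∑ i ∈ Finset.range m, ENNReal.ofReal (Gabs c (f (t i)) (f (t (i+1))))) +
          ENNReal.ofReal (Gabs c (f (t m)) (f x)) ≤ genVar (Gabs c) f a x := by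
        rcases eq_or_lt_of_le hkm with heq | hlt2
        · have hzero : Gabs c (f (t m)) (f x) = 0 := by
            rw [heq]; unfold Gabs; simp [hc]
          rw [hzero, ENNReal.ofReal_zero, add_zero]
          exact le_genVar _ f a x h1 (fun i hi => h2 i (by omega)) hkm
        · have hval : (∑ i ∈ Finset.range m,
              ENNReal.ofReal (Gabs c (f (t i)) (f (t (i+1))))) +
              ENNReal.ofReal (Gabs c (f (t m)) (f x)) =
              pSum (Gabs c) f (m+1, fun i => if i ≤ m then t i else x) := by
            rw [pSum]
            dsimp only
            rw [Finset.sum_range_succ, if_pos le_rfl, if_neg (by omega)]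
            congr 1
            refine Finset.sum_congr rfl fun i hi => ?_
            have hi' : i < m := Finset.mem_range.mp hi
            rw [if_pos (by omega), if_pos (by omega)]
          rw [hval]
          refine le_genVar _ f a x ?_ ?_ ?_
          · simpa [Nat.zero_le] using h1
          · intro i hi
            try dsimp only
            rcases Nat.lt_or_ge i m with h | h
            · rw [if_pos (by omega), if_pos (by omega)]
              exact h2 i (by omega)
            · rw [if_pos (by omega : i ≤ m), if_neg (by omega : ¬ i + 1 ≤ m),
                show i = m by omega]
              exact hlt2
          · simp [show ¬ (m + 1 ≤ m) by omega]
      -- right part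
      have hright : ENNReal.ofReal (Gabs c (f x) (f (t (m+1)))) +
          (∑ i ∈ Finset.range (n-(m+1)),
            ENNReal.ofReal (Gabs c (f (t (m+1+i))) (f (t (m+1+i+1)))))
          ≤ genVar (Gabs c) f x y := by
        have hval : ENNReal.ofReal (Gabs c (f x) (f (t (m+1)))) +
            (∑ i ∈ Finset.range (n-(m+1)),
              ENNReal.ofReal (Gabs c (f (t (m+1+i))) (f (t (m+1+i+1))))) =
            pSum (Gabs c) f (n-(m+1)+1, fun i => if i = 0 then x else t (m + i)) := by
          rw [pSum]
          dsimp only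
          rw [Finset.sum_range_succ']
          rw [add_comm]
          congr 1
          · refine Finset.sum_congr rfl fun i hi => ?_
            have e1 : m + (i + 1) = m + 1 + i := by omega
            have e2 : m + (i + 1 + 1) = m + 1 + i + 1 := by omega
            rw [if_neg (by omega : ¬ (i:ℕ) + 1 = 0), if_neg (by omega : ¬ (i:ℕ) + 1 + 1 = 0),
              e1, e2]
        rw [hval]
        refine le_genVar _ f x y ?_ ?_ ?_
        · simp
        · intro i hi
          try dsimp only
          rcases Nat.eq_or_lt_of_le (Nat.one_le_iff_ne_zero.mpr (by omega : i + 1 ≠ 0)) with h | h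
          · rw [if_pos (by omega : i = 0), if_neg (by omega)]
            have he : m + (i + 1) = m + 1 := by omega
            rw [he]
            exact hPk
          · rw [if_neg (by omega : ¬ i = 0), if_neg (by omega)]
            have e1 : m + (i + 1) = (m + i) + 1 := by omega
            rw [e1]
            exact h2 _ (by omega)
        · rw [if_neg (by omega)]
          have he : m + (n - (m+1) + 1) = n := by omega
          rw [he]
          exact h3
      calc (∑ i ∈ Finset.range m, ENNReal.ofReal (Gabs c (f (t i)) (f (t (i+1))))) +
            ENNReal.ofReal (Gabs c (f (t m)) (f (t (m+1)))) +
            (∑ i ∈ Finset.range (n-(m+1)),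
              ENNReal.ofReal (Gabs c (f (t (m+1+i))) (f (t (m+1+i+1)))))
          ≤ (∑ i ∈ Finset.range m, ENNReal.ofReal (Gabs c (f (t i)) (f (t (i+1))))) +
            (ENNReal.ofReal (Gabs c (f (t m)) (f x)) +
             ENNReal.ofReal (Gabs c (f x) (f (t (m+1)))) + ENNReal.ofReal c) +
            (∑ i ∈ Finset.range (n-(m+1)),
              ENNReal.ofReal (Gabs c (f (t (m+1+i))) (f (t (m+1+i+1))))) :=
            add_le_add_left (add_le_add_right hstrad _) _
        _ = ((∑ i ∈ Finset.range m, ENNReal.ofReal (Gabs c (f (t i)) (f (t (i+1))))) +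
             ENNReal.ofReal (Gabs c (f (t m)) (f x))) +
            (ENNReal.ofReal (Gabs c (f x) (f (t (m+1)))) +
             (∑ i ∈ Finset.range (n-(m+1)),
               ENNReal.ofReal (Gabs c (f (t (m+1+i))) (f (t (m+1+i+1)))))) +
            ENNReal.ofReal c := by ring
        _ ≤ genVar (Gabs c) f a x + genVar (Gabs c) f x y + ENNReal.ofReal c :=
            add_le_add_left (add_le_add hleft hright) _

/-! ### Finiteness for cadlag functions -/

theorem genVar_abs_ne_top (f : ℝ → ℝ) {a b c : ℝ} (hab : a ≤ b) (hc : 0 < c)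
    (hrc : ∀ x ∈ Set.Ico a b, Filter.Tendsto f (nhdsWithin x (Set.Ioi x)) (nhds (f x)))
    (hll : ∀ x ∈ Set.Ioc a b, ∃ L : ℝ, Filter.Tendsto f (nhdsWithin x (Set.Iio x)) (nhds L)) :
    genVar (Gabs c) f a b ≠ ∞ := by
  set S := {t : ℝ | t ∈ Set.Icc a b ∧ genVar (Gabs c) f a t ≠ ∞} with hS
  have haS : a ∈ S := ⟨⟨le_rfl, hab⟩, by rw [genVar_self]; exact ENNReal.zero_ne_top⟩
  have hSne : S.Nonempty := ⟨a, haS⟩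
  have hbdd : BddAbove S := ⟨b, fun t ht => ht.1.2⟩
  set m := sSup S with hm
  have ham : a ≤ m := le_csSup hbdd haS
  have hmb : m ≤ b := csSup_le hSne (fun t ht => ht.1.2)
  have hmfin : genVar (Gabs c) f a m ≠ ∞ := by
    rcases eq_or_lt_of_le ham with heq | hlt
    · rw [← heq, genVar_self]; exact ENNReal.zero_ne_top
    · obtain ⟨L, hL⟩ := hll m ⟨hlt, hmb⟩
      rw [Metric.tendsto_nhdsWithin_nhds] at hL
      obtain ⟨δ, hδ, hLδ⟩ := hL (c/2) (by linarith)
      have hδ' : 0 < min δ (m - a) := lt_min hδ (by linarith)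
      obtain ⟨t', ht'S, ht'lt⟩ := exists_lt_of_lt_csSup hSne
        (show m - min δ (m-a) < m by linarith)
      have ht'm : t' ≤ m := le_csSup hbdd ht'S
      have hLbd : ∀ p, t' ≤ p → p < m → |f p - L| < c/2 := by
        intro p hp1 hp2
        have h1 : dist p m < δ := by
          rw [Real.dist_eq, abs_of_nonpos (by linarith)]
          have : m - min δ (m - a) ≤ m - (m - p) := by
            have : m - min δ (m-a) < p := by linarith [min_le_left δ (m-a)]
            linarith [min_le_left δ (m-a)]
          have hmin := min_le_left δ (m - a)
          linarith
        have := hLδ (Set.mem_Iio.mpr hp2) h1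
        rwa [Real.dist_eq] at this
      rcases eq_or_lt_of_le ht'm with heq2 | hlt2
      · rw [← heq2]; exact ht'S.2
      · have hmid : genVar (Gabs c) f t' m ≤ ENNReal.ofReal |f m - L| := by
          apply genVar_abs_le_of_osc f (le_of_lt hc) (abs_nonneg _)
          · intro p q hp hq
            have h1 := hLbd p hp.1 hp.2
            have h2 := hLbd q hq.1 hq.2
            calc |f p - f q| = |(f p - L) - (f q - L)| := by ring_nf
              _ ≤ |f p - L| + |f q - L| := abs_sub _ _
              _ ≤ c := by linarith
          · intro p hp
            have h1 := hLbd p hp.1 hp.2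
            calc |f m - f p| - c ≤ (|f m - L| + |L - f p|) - c := by
                  have : f m - f p = (f m - L) + (L - f p) := by ring
                  rw [this]; linarith [abs_add_le (f m - L) (L - f p)]
              _ ≤ |f m - L| := by
                  rw [abs_sub_comm L (f p)]
                  linarith
        have hsplitm := genVar_abs_split f ht'S.1.1 ht'm (le_of_lt hc)
        apply ne_top_of_le_ne_top _ hsplitm
        apply ENNReal.add_ne_top.mpr
        constructor
        · apply ENNReal.add_ne_top.mpr
          exact ⟨ht'S.2, ne_top_of_le_ne_top ENNReal.ofReal_ne_top hmid⟩
        · exact ENNReal.ofReal_ne_top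
  have hmbeq : m = b := by
    by_contra hne
    have hmb' : m < b := lt_of_le_of_ne hmb hne
    have h1 := hrc m ⟨ham, hmb'⟩
    rw [Metric.tendsto_nhdsWithin_nhds] at h1
    obtain ⟨δ, hδ, hδ2⟩ := h1 (c/2) (by linarith)
    set y := min (m + δ/2) b with hy
    have hmy : m < y := lt_min (by linarith) hmb'
    have hyb : y ≤ b := min_le_right _ _
    have hnear : ∀ p, m ≤ p → p ≤ y → |f p - f m| < c/2 := by
      intro p hp1 hp2
      rcases eq_or_lt_of_le hp1 with heq | hlt'
      · rw [← heq]; simpa using (by linarith : (0:ℝ) < c/2)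
      · have hd : dist p m < δ := by
          rw [Real.dist_eq, abs_of_nonneg (by linarith)]
          have := min_le_left (m + δ/2) b
          have : p ≤ m + δ/2 := le_trans hp2 this
          linarith
        have := hδ2 (Set.mem_Ioi.mpr hlt') hd
        rwa [Real.dist_eq] at this
    have hmid : genVar (Gabs c) f m y ≤ ENNReal.ofReal 0 := by
      apply genVar_abs_le_of_osc f (le_of_lt hc) le_rfl
      · intro p q hp hq
        have h1 := hnear p hp.1 (le_of_lt hp.2)
        have h2 := hnear q hq.1 (le_of_lt hq.2)
        calc |f p - f q| = |(f p - f m) - (f q - f m)| := by ring_nf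
          _ ≤ |f p - f m| + |f q - f m| := abs_sub _ _
          _ ≤ c := by linarith
      · intro p hp
        have h1 := hnear p hp.1 (le_of_lt hp.2)
        have h2 := hnear y (le_of_lt hmy) le_rfl
        calc |f y - f p| - c = |(f y - f m) - (f p - f m)| - c := by ring_nf
          _ ≤ (|f y - f m| + |f p - f m|) - c := by linarith [abs_sub (f y - f m) (f p - f m)]
          _ ≤ 0 := by linarith
    have hsplity := genVar_abs_split f ham (le_of_lt hmy) (le_of_lt hc)
    have hyS : y ∈ S := by
      refine ⟨⟨le_trans ham (le_of_lt hmy), hyb⟩, ?_⟩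
      apply ne_top_of_le_ne_top _ hsplity
      apply ENNReal.add_ne_top.mpr
      refine ⟨ENNReal.add_ne_top.mpr ⟨hmfin, ?_⟩, ENNReal.ofReal_ne_top⟩
      exact ne_top_of_le_ne_top ENNReal.ofReal_ne_top hmid
    have : y ≤ m := le_csSup hbdd hyS
    linarith
  rw [← hmbeq]; exact hmfin

/-! ### Merging: continuous consequences of the discrete lemmas -/

lemma Gup_le_Gabs (c : ℝ) : ∀ x y, Gup c x y ≤ Gabs c x y :=
  fun x y => max_le_max (by have := le_abs_self (y - x); linarith) le_rfl
lemma Gdown_le_Gabs (c : ℝ) : ∀ x y, Gdown c x y ≤ Gabs c x y :=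
  fun x y => max_le_max (by have := neg_le_abs (y - x); linarith) le_rfl

lemma bridge_both {ρ G : ℝ → ℝ → ℝ} (hGρ : ∀ x y, G x y = ρ x y) (hG0 : ∀ x y, 0 ≤ G x y)
    (f : ℝ → ℝ) (a : ℝ) (F : Finset ℝ) (hne : F.Nonempty) (hFa : ∀ z ∈ F, a ≤ z)
    {p : ℝ} (hp : p ∈ F) (hfin : genVar G f a p ≠ ∞)
    {n : ℕ} {t : ℕ → ℝ} (h2 : ∀ i < n, t i < t (i+1)) (h3 : t n ≤ p)
    (hmem : ∀ i ≤ n, t i ∈ F) {ε : ℝ}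
    (hsum : (genVar G f a p).toReal - ε ≤ ∑ i ∈ Finset.range n, G (f (t i)) (f (t (i+1)))) :
    (genVar G f a p).toReal - ε ≤ dp (fun i => f (wE F hne i)) ρ (idxE F p hp) ∧
    dp (fun i => f (wE F hne i)) ρ (idxE F p hp) ≤ (genVar G f a p).toReal := by
  have hρ0 : ∀ x y, 0 ≤ ρ x y := fun x y => (hGρ x y) ▸ (hG0 x y)
  constructor
  · have hch := bridge_chain ρ hρ0 f F hne n t h2 hmem
    have hsum' : ∑ i ∈ Finset.range n, G (f (t i)) (f (t (i+1))) =
        ∑ i ∈ Finset.range n, ρ (f (t i)) (f (t (i+1))) :=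
      Finset.sum_congr rfl fun i _ => hGρ _ _
    have hmono : dp (fun i => f (wE F hne i)) ρ (idxE F (t n) (hmem n le_rfl)) ≤
        dp (fun i => f (wE F hne i)) ρ (idxE F p hp) :=
      dp_mono _ _ hρ0 (idxE_mono F _ _ h3)
    rw [hsum'] at hsum
    linarith
  · have hb := bridge_dp ρ G hGρ hG0 f a F hne hFa (idxE F p hp) (idxE_le F p hp)
    rw [wE_idxE] at hb
    exact (ENNReal.ofReal_le_iff_le_toReal hfin).mp hb

/-- the key oscillation bound for `D = f - UTV + DTV` -/
lemma key_osc (f : ℝ → ℝ) {a b c : ℝ} (hc : 0 < c)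
    (hfin : genVar (Gabs c) f a b ≠ ∞) {x y : ℝ}
    (hx : x ∈ Set.Icc a b) (hy : y ∈ Set.Icc a b) (hxy : x < y) :
    |(f y - (genVar (Gup c) f a y).toReal + (genVar (Gdown c) f a y).toReal) -
     (f x - (genVar (Gup c) f a x).toReal + (genVar (Gdown c) f a x).toReal)| ≤ c := by
  have hfinU : ∀ p : ℝ, p ∈ Set.Icc a b → genVar (Gup c) f a p ≠ ∞ := fun p hp =>
    ne_top_of_le_ne_top hfin (le_trans (genVar_mono_G (Gup_le_Gabs c) f a p)
      (genVar_mono_right _ f a hp.2))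
  have hfinW : ∀ p : ℝ, p ∈ Set.Icc a b → genVar (Gdown c) f a p ≠ ∞ := fun p hp =>
    ne_top_of_le_ne_top hfin (le_trans (genVar_mono_G (Gdown_le_Gabs c) f a p)
      (genVar_mono_right _ f a hp.2))
  rw [abs_le]
  have main : ∀ ε : ℝ, 0 < ε →
      |(f y - (genVar (Gup c) f a y).toReal + (genVar (Gdown c) f a y).toReal) -
       (f x - (genVar (Gup c) f a x).toReal + (genVar (Gdown c) f a x).toReal)| ≤ c + 2*ε := by
    intro ε hε
    obtain ⟨nA, tA, h1A, h2A, h3A, hsA⟩ :=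
      exists_ptn_near (Gup_nonneg c) f hx.1 (hfinU x hx) hε
    obtain ⟨nB, tB, h1B, h2B, h3B, hsB⟩ :=
      exists_ptn_near (Gdown_nonneg c) f hx.1 (hfinW x hx) hε
    obtain ⟨nC, tC, h1C, h2C, h3C, hsC⟩ :=
      exists_ptn_near (Gup_nonneg c) f hy.1 (hfinU y hy) hε
    obtain ⟨nD, tD, h1D, h2D, h3D, hsD⟩ :=
      exists_ptn_near (Gdown_nonneg c) f hy.1 (hfinW y hy) hε
    set F := ((((Finset.range (nA+1)).image tA ∪ (Finset.range (nB+1)).image tB) ∪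
      (Finset.range (nC+1)).image tC) ∪ (Finset.range (nD+1)).image tD) ∪ {x, y} with hF
    have hxF : x ∈ F := by
      apply Finset.mem_union_right
      simp
    have hyF : y ∈ F := by
      apply Finset.mem_union_right
      simp
    have hne : F.Nonempty := ⟨x, hxF⟩
    have hFa : ∀ z ∈ F, a ≤ z := by
      intro z hz
      simp only [hF, Finset.mem_union, Finset.mem_image, Finset.mem_range,
        Finset.mem_insert, Finset.mem_singleton] at hz
      rcases hz with ((((⟨i, hi, rfl⟩ | ⟨i, hi, rfl⟩) | ⟨i, hi, rfl⟩) | ⟨i, hi, rfl⟩) | rfl | rfl)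
      · exact (ptn_pt_mem h1A h2A h3A (by omega)).1
      · exact (ptn_pt_mem h1B h2B h3B (by omega)).1
      · exact (ptn_pt_mem h1C h2C h3C (by omega)).1
      · exact (ptn_pt_mem h1D h2D h3D (by omega)).1
      · exact hx.1
      · exact hy.1
    have hmemA : ∀ i ≤ nA, tA i ∈ F := fun i hi =>
      Finset.mem_union_left _ (Finset.mem_union_left _ (Finset.mem_union_left _
        (Finset.mem_union_left _
          (Finset.mem_image_of_mem _ (Finset.mem_range.mpr (by omega))))))
    have hmemB : ∀ i ≤ nB, tB i ∈ F := fun i hi =>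
      Finset.mem_union_left _ (Finset.mem_union_left _ (Finset.mem_union_left _
        (Finset.mem_union_right _
          (Finset.mem_image_of_mem _ (Finset.mem_range.mpr (by omega))))))
    have hmemC : ∀ i ≤ nC, tC i ∈ F := fun i hi =>
      Finset.mem_union_left _ (Finset.mem_union_left _ (Finset.mem_union_right _
          (Finset.mem_image_of_mem _ (Finset.mem_range.mpr (by omega)))))
    have hmemD : ∀ i ≤ nD, tD i ∈ F := fun i hi =>
      Finset.mem_union_left _ (Finset.mem_union_right _
          (Finset.mem_image_of_mem _ (Finset.mem_range.mpr (by omega))))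
    have hA := bridge_both (G := Gup c) (ρ := fun u v => pm c (v - u)) (fun u v => rfl)
      (Gup_nonneg c) f a F hne hFa hxF (hfinU x hx) h2A h3A hmemA hsA
    have hB := bridge_both (G := Gdown c) (ρ := fun u v => pm c (u - v)) (fun u v => rfl)
      (Gdown_nonneg c) f a F hne hFa hxF (hfinW x hx) h2B h3B hmemB hsB
    have hC := bridge_both (G := Gup c) (ρ := fun u v => pm c (v - u)) (fun u v => rfl)
      (Gup_nonneg c) f a F hne hFa hyF (hfinU y hy) h2C h3C hmemC hsC
    have hD := bridge_both (G := Gdown c) (ρ := fun u v => pm c (u - v)) (fun u v => rfl)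
      (Gdown_nonneg c) f a F hne hFa hyF (hfinW y hy) h2D h3D hmemD hsD
    have hosc := dD_osc (fun i => f (wE F hne i)) c (le_of_lt hc)
      (idxE F y hyF) (idxE F x hxF)
    unfold dD dU dW at hosc
    dsimp only at hosc
    rw [wE_idxE F hne y hyF, wE_idxE F hne x hxF] at hosc
    rw [abs_le] at hosc ⊢
    obtain ⟨ho1, ho2⟩ := hosc
    obtain ⟨hA1, hA2⟩ := hA
    obtain ⟨hB1, hB2⟩ := hB
    obtain ⟨hC1, hC2⟩ := hC
    obtain ⟨hD1, hD2⟩ := hD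
    constructor <;> [linarith; linarith]
  rcases le_or_gt (|(f y - (genVar (Gup c) f a y).toReal + (genVar (Gdown c) f a y).toReal) -
      (f x - (genVar (Gup c) f a x).toReal + (genVar (Gdown c) f a x).toReal)|) c with h | h
  · exact abs_le.mp h
  · exfalso
    have := main ((|(f y - (genVar (Gup c) f a y).toReal + (genVar (Gdown c) f a y).toReal) -
      (f x - (genVar (Gup c) f a x).toReal + (genVar (Gdown c) f a x).toReal)| - c)/4)
      (by linarith)
    linarith

/-- continuous `UTV + DTV ≤ TV^c` -/
lemma cont_UW_le_T (f : ℝ → ℝ) {a b c : ℝ} (hab : a ≤ b) (hc : 0 < c)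
    (hfin : genVar (Gabs c) f a b ≠ ∞) :
    (genVar (Gup c) f a b).toReal + (genVar (Gdown c) f a b).toReal ≤
      (genVar (Gabs c) f a b).toReal := by
  have hfinU : genVar (Gup c) f a b ≠ ∞ :=
    ne_top_of_le_ne_top hfin (genVar_mono_G (Gup_le_Gabs c) f a b)
  have hfinW : genVar (Gdown c) f a b ≠ ∞ :=
    ne_top_of_le_ne_top hfin (genVar_mono_G (Gdown_le_Gabs c) f a b)
  have main : ∀ ε : ℝ, 0 < ε →
      (genVar (Gup c) f a b).toReal + (genVar (Gdown c) f a b).toReal ≤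
        (genVar (Gabs c) f a b).toReal + 2*ε := by
    intro ε hε
    obtain ⟨nA, tA, h1A, h2A, h3A, hsA⟩ := exists_ptn_near (Gup_nonneg c) f hab hfinU hε
    obtain ⟨nB, tB, h1B, h2B, h3B, hsB⟩ := exists_ptn_near (Gdown_nonneg c) f hab hfinW hε
    set F := ((Finset.range (nA+1)).image tA ∪ (Finset.range (nB+1)).image tB) ∪ {b} with hF
    have hbF : b ∈ F := by
      apply Finset.mem_union_right; simp
    have hne : F.Nonempty := ⟨b, hbF⟩
    have hFa : ∀ z ∈ F, a ≤ z := by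
      intro z hz
      simp only [hF, Finset.mem_union, Finset.mem_image, Finset.mem_range,
        Finset.mem_singleton] at hz
      rcases hz with ((⟨i, hi, rfl⟩ | ⟨i, hi, rfl⟩) | rfl)
      · exact (ptn_pt_mem h1A h2A h3A (by omega)).1
      · exact (ptn_pt_mem h1B h2B h3B (by omega)).1
      · exact hab
    have hmemA : ∀ i ≤ nA, tA i ∈ F := fun i hi =>
      Finset.mem_union_left _ (Finset.mem_union_left _
        (Finset.mem_image_of_mem _ (Finset.mem_range.mpr (by omega))))
    have hmemB : ∀ i ≤ nB, tB i ∈ F := fun i hi =>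
      Finset.mem_union_left _ (Finset.mem_union_right _
        (Finset.mem_image_of_mem _ (Finset.mem_range.mpr (by omega))))
    have hA := bridge_both (G := Gup c) (ρ := fun u v => pm c (v - u)) (fun u v => rfl)
      (Gup_nonneg c) f a F hne hFa hbF hfinU h2A h3A hmemA hsA
    have hB := bridge_both (G := Gdown c) (ρ := fun u v => pm c (u - v)) (fun u v => rfl)
      (Gdown_nonneg c) f a F hne hFa hbF hfinW h2B h3B hmemB hsB
    have hd2 := dU_add_dW_le_dT c hc (idxE F b hbF) (fun i => f (wE F hne i))
    have hbr := bridge_dp (fun u v => pm c |v - u|) (Gabs c) (fun u v => rfl)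
      (Gabs_nonneg c) f a F hne hFa (idxE F b hbF) (idxE_le F b hbF)
    rw [wE_idxE] at hbr
    have hdT : dT (fun i => f (wE F hne i)) c (idxE F b hbF) ≤
        (genVar (Gabs c) f a b).toReal :=
      (ENNReal.ofReal_le_iff_le_toReal hfin).mp hbr
    unfold dU dW dT at hd2
    unfold dT at hdT
    obtain ⟨hA1, hA2⟩ := hA
    obtain ⟨hB1, hB2⟩ := hB
    linarith
  rcases le_or_gt ((genVar (Gup c) f a b).toReal + (genVar (Gdown c) f a b).toReal)
      ((genVar (Gabs c) f a b).toReal) with h | h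
  · exact h
  · exfalso
    have := main (((genVar (Gup c) f a b).toReal + (genVar (Gdown c) f a b).toReal -
      (genVar (Gabs c) f a b).toReal)/4) (by linarith)
    linarith

/-! ### Final assembly -/

lemma Gabs_zero (x y : ℝ) : Gabs 0 x y = |y - x| := by
  unfold Gabs
  rw [sub_zero]
  exact max_eq_left (abs_nonneg _)

lemma lower_bound (f h : ℝ → ℝ) (a b c : ℝ) (hc : 0 ≤ c)
    (hosc : ∀ s ∈ Set.Icc a b, ∀ u ∈ Set.Icc a b, |h s - h u| ≤ c) :
    genVar (Gabs c) f a b ≤ genVar (Gabs 0) (fun s => f s + h s) a b := by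
  rw [genVar_eq_iSup_ptn, genVar_eq_iSup_ptn]
  refine iSup_le fun p => le_trans ?_ (le_iSup _ p)
  obtain ⟨⟨n, t⟩, h1, h2, h3⟩ := p
  dsimp only at h1 h2 h3
  refine Finset.sum_le_sum fun i hi => ?_
  have hi' : i < n := Finset.mem_range.mp hi
  have hti : t i ∈ Set.Icc a b := ptn_pt_mem h1 h2 h3 (by omega)
  have hti1 : t (i+1) ∈ Set.Icc a b := ptn_pt_mem h1 h2 h3 (by omega)
  apply ENNReal.ofReal_le_ofReal
  have hh := hosc (t (i+1)) hti1 (t i) hti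
  show Gabs c (f (t i)) (f (t (i+1))) ≤
    Gabs 0 (f (t i) + h (t i)) (f (t (i+1)) + h (t (i+1)))
  have habs : |f (t (i+1)) - f (t i)| - c ≤
      |(f (t (i+1)) + h (t (i+1))) - (f (t i) + h (t i))| := by
    have he : f (t (i+1)) - f (t i) =
        ((f (t (i+1)) + h (t (i+1))) - (f (t i) + h (t i))) - (h (t (i+1)) - h (t i)) := by
      ring
    have h4 := abs_sub ((f (t (i+1)) + h (t (i+1))) - (f (t i) + h (t i)))
      (h (t (i+1)) - h (t i))
    rw [he]
    linarith
  rw [Gabs_zero]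
  exact max_le habs (abs_nonneg _)

theorem main_result
    (a b c : ℝ) (hab : a < b) (hc : 0 < c) (f : ℝ → ℝ)
    (hrc : ∀ x ∈ Set.Ico a b, Filter.Tendsto f (nhdsWithin x (Set.Ioi x)) (nhds (f x)))
    (hll : ∀ x ∈ Set.Ioc a b, ∃ L : ℝ, Filter.Tendsto f (nhdsWithin x (Set.Iio x)) (nhds L)) :
    ∃ h : ℝ → ℝ, (∀ s ∈ Set.Icc a b, ∀ u ∈ Set.Icc a b, |h s - h u| ≤ c) ∧
      genVar (Gabs 0) (fun s => f s + h s) a b = genVar (Gabs c) f a b := by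
  have hab' : a ≤ b := le_of_lt hab
  have hfin : genVar (Gabs c) f a b ≠ ∞ := genVar_abs_ne_top f hab' hc hrc hll
  have hfinU : ∀ p ∈ Set.Icc a b, genVar (Gup c) f a p ≠ ∞ := fun p hp =>
    ne_top_of_le_ne_top hfin (le_trans (genVar_mono_G (Gup_le_Gabs c) f a p)
      (genVar_mono_right _ f a hp.2))
  have hfinW : ∀ p ∈ Set.Icc a b, genVar (Gdown c) f a p ≠ ∞ := fun p hp =>
    ne_top_of_le_ne_top hfin (le_trans (genVar_mono_G (Gdown_le_Gabs c) f a p)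
      (genVar_mono_right _ f a hp.2))
  set A : ℝ → ℝ := fun t => (genVar (Gup c) f a t).toReal with hA
  set B : ℝ → ℝ := fun t => (genVar (Gdown c) f a t).toReal with hB
  refine ⟨fun s => f a + A s - B s - f s, ?_, ?_⟩
  · -- oscillation bound
    intro s hs u hu
    rcases lt_trichotomy s u with hlt | heq | hlt
    · have hk := key_osc f hc hfin hs hu hlt
      have he : (f a + A s - B s - f s) - (f a + A u - B u - f u) =
          (f u - (genVar (Gup c) f a u).toReal + (genVar (Gdown c) f a u).toReal) -
          (f s - (genVar (Gup c) f a s).toReal + (genVar (Gdown c) f a s).toReal) := by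
        simp only [hA, hB]; ring
      rw [he]; exact hk
    · rw [heq]; simpa using le_of_lt hc
    · have hk := key_osc f hc hfin hu hs hlt
      have he : (f a + A s - B s - f s) - (f a + A u - B u - f u) =
          -((f s - (genVar (Gup c) f a s).toReal + (genVar (Gdown c) f a s).toReal) -
            (f u - (genVar (Gup c) f a u).toReal + (genVar (Gdown c) f a u).toReal)) := by
        simp only [hA, hB]; ring
      rw [he, abs_neg]; exact hk
  · -- equality of variations
    have hosc : ∀ s ∈ Set.Icc a b, ∀ u ∈ Set.Icc a b,
        |(f a + A s - B s - f s) - (f a + A u - B u - f u)| ≤ c := by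
      intro s hs u hu
      rcases lt_trichotomy s u with hlt | heq | hlt
      · have hk := key_osc f hc hfin hs hu hlt
        have he : (f a + A s - B s - f s) - (f a + A u - B u - f u) =
            (f u - (genVar (Gup c) f a u).toReal + (genVar (Gdown c) f a u).toReal) -
            (f s - (genVar (Gup c) f a s).toReal + (genVar (Gdown c) f a s).toReal) := by
          simp only [hA, hB]; ring
        rw [he]; exact hk
      · rw [heq]; simpa using le_of_lt hc
      · have hk := key_osc f hc hfin hu hs hlt
        have he : (f a + A s - B s - f s) - (f a + A u - B u - f u) =
            -((f s - (genVar (Gup c) f a s).toReal + (genVar (Gdown c) f a s).toReal) -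
              (f u - (genVar (Gup c) f a u).toReal + (genVar (Gdown c) f a u).toReal)) := by
          simp only [hA, hB]; ring
        rw [he, abs_neg]; exact hk
    apply le_antisymm
    · -- upper bound : TV(f + h) ≤ TV^c(f)
      have hg : (fun s => f s + (f a + A s - B s - f s)) = fun s => f a + (A s - B s) := by
        funext s; ring
      rw [hg]
      have h1 : genVar (Gabs 0) (fun s => f a + (A s - B s)) a b ≤
          ENNReal.ofReal (A b + B b) := by
        rw [genVar_eq_iSup_ptn]
        refine iSup_le fun p => ?_
        obtain ⟨⟨n, t⟩, h1, h2, h3⟩ := p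
        dsimp only at h1 h2 h3
        have hterm : pSum (Gabs 0) (fun s => f a + (A s - B s)) (n, t) =
            ENNReal.ofReal (∑ i ∈ Finset.range n,
              |(A (t (i+1)) - B (t (i+1))) - (A (t i) - B (t i))|) := by
          rw [pSum, ENNReal.ofReal_sum_of_nonneg (fun i _ => abs_nonneg _)]
          refine Finset.sum_congr rfl fun i _ => ?_
          congr 1
          rw [Gabs_zero]
          congr 1
          ring
        rw [hterm]
        apply ENNReal.ofReal_le_ofReal
        have hmemt : ∀ i ≤ n, t i ∈ Set.Icc a b := fun i hi => ptn_pt_mem h1 h2 h3 hi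
        have hAm : ∀ i < n, A (t i) ≤ A (t (i+1)) := by
          intro i hi
          exact ENNReal.toReal_mono (hfinU _ (hmemt (i+1) (by omega)))
            (genVar_mono_right _ f a (le_of_lt (h2 i hi)))
        have hBm : ∀ i < n, B (t i) ≤ B (t (i+1)) := by
          intro i hi
          exact ENNReal.toReal_mono (hfinW _ (hmemt (i+1) (by omega)))
            (genVar_mono_right _ f a (le_of_lt (h2 i hi)))
        calc ∑ i ∈ Finset.range n, |(A (t (i+1)) - B (t (i+1))) - (A (t i) - B (t i))|
            ≤ ∑ i ∈ Finset.range n,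
              ((A (t (i+1)) - A (t i)) + (B (t (i+1)) - B (t i))) := by
              refine Finset.sum_le_sum fun i hi => ?_
              have hi' : i < n := Finset.mem_range.mp hi
              have h4 : (A (t (i+1)) - B (t (i+1))) - (A (t i) - B (t i)) =
                  (A (t (i+1)) - A (t i)) - (B (t (i+1)) - B (t i)) := by ring
              rw [h4]
              have h5 := abs_sub (A (t (i+1)) - A (t i)) (B (t (i+1)) - B (t i))
              have h6 := hAm i hi'
              have h7 := hBm i hi'
              rw [abs_of_nonneg (show (0:ℝ) ≤ A (t (i+1)) - A (t i) by linarith),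
                abs_of_nonneg (show (0:ℝ) ≤ B (t (i+1)) - B (t i) by linarith)] at h5
              linarith
          _ = (A (t n) - A (t 0)) + (B (t n) - B (t 0)) := by
              rw [Finset.sum_add_distrib, Finset.sum_range_sub (fun i => A (t i)),
                Finset.sum_range_sub (fun i => B (t i))]
          _ ≤ A b + B b := by
              have h8 : A (t n) ≤ A b :=
                ENNReal.toReal_mono (hfinU b ⟨hab', le_rfl⟩) (genVar_mono_right _ f a h3)
              have h9 : B (t n) ≤ B b :=
                ENNReal.toReal_mono (hfinW b ⟨hab', le_rfl⟩) (genVar_mono_right _ f a h3)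
              have h10 : 0 ≤ A (t 0) := ENNReal.toReal_nonneg
              have h11 : 0 ≤ B (t 0) := ENNReal.toReal_nonneg
              linarith
      have h2 : ENNReal.ofReal (A b + B b) ≤ genVar (Gabs c) f a b := by
        have h3 := cont_UW_le_T f hab' hc hfin
        calc ENNReal.ofReal (A b + B b)
            ≤ ENNReal.ofReal ((genVar (Gabs c) f a b).toReal) :=
              ENNReal.ofReal_le_ofReal h3
          _ = genVar (Gabs c) f a b := ENNReal.ofReal_toReal hfin
      exact le_trans h1 h2
    · exact lower_bound f _ a b c (le_of_lt hc) hosc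

end TVwork

/-- The infimum of total variations over perturbations `h` with oscillation at most `c`
equals the truncated variation `TV^c(f,[a,b])`, and the infimum is attained. -/
theorem inf_totalVar_osc_ball_eq_truncVar
    (a b c : ℝ) (hab : a < b) (hc : 0 < c) (f : ℝ → ℝ) (hf : CadlagOn f a b) :
    sInf {v : ℝ≥0∞ | ∃ h : ℝ → ℝ,
        (∀ s ∈ Set.Icc a b, ∀ u ∈ Set.Icc a b, |h s - h u| ≤ c) ∧
        v = totalVar (fun s => f s + h s) a b} = truncVar f a b c ∧
    ∃ h : ℝ → ℝ, (∀ s ∈ Set.Icc a b, ∀ u ∈ Set.Icc a b, |h s - h u| ≤ c) ∧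
        totalVar (fun s => f s + h s) a b = truncVar f a b c := by
  obtain ⟨h, hosc, heq⟩ := TVwork.main_result a b c hab hc f hf.1 hf.2
  have heq' : totalVar (fun s => f s + h s) a b = truncVar f a b c := heq
  have hlow : ∀ (h' : ℝ → ℝ), (∀ s ∈ Set.Icc a b, ∀ u ∈ Set.Icc a b, |h' s - h' u| ≤ c) →
      truncVar f a b c ≤ totalVar (fun s => f s + h' s) a b := fun h' ho =>
    TVwork.lower_bound f h' a b c (le_of_lt hc) ho
  constructor
  · apply le_antisymm
    · exact sInf_le ⟨h, hosc, heq'.symm⟩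
    · refine le_sInf fun v hv => ?_
      obtain ⟨h', ho', hveq⟩ := hv
      rw [hveq]
      exact hlow h' ho'
  · exact ⟨h, hosc, heq'⟩
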